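/- Let q be a real number with q > 0 and q ≠ 1, and let λ ∈ ℝ. Define ev : ℂ[z] → ℂ[x,y] by ev(z^n) = Σ_{k=0}^n [n choose k]_q q^{(k+λ)(n−k)} x^k y^{n−k} (the ordered expansion of (x + q^λ y)^n in the quantum plane yx = q²xy). Then the adjoint of ev with respect to the q-Fischer inner products is given by ev†(f ⊗ g)(z) = f(z) g(q^λ z); that is, for all P ∈ ℂ[z], f ∈ ℂ[x], g ∈ ℂ[y]: ⟨ev(P), f(x)g(y)⟩_{ℂ[x,y]} = ⟨P, f(z)g(q^λ z)⟩_{ℂ[z]}. -/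

import Mathlib

noncomputable section

open Finset

/-- The q-number [x] = (q^x − q^{−x})/(q − q⁻¹) for real q > 0 and x ∈ ℝ. -/
def qnumR (q x : ℝ) : ℝ := (q ^ x - q ^ (-x)) / (q - q⁻¹)

/-- [x]_n = ∏_{s=0}^{n−1}[x+s]. -/
def qpochR (q x : ℝ) (n : ℕ) : ℝ := ∏ s ∈ Finset.range n, qnumR q (x + s)

/-- [n]! = [1]_n. -/
def qfactR (q : ℝ) (n : ℕ) : ℝ := ∏ s ∈ Finset.range n, qnumR q ((s : ℝ) + 1)

/-- [n choose k] = [n]!/([k]![n−k]!). -/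
def qbinomR (q : ℝ) (n k : ℕ) : ℝ := qfactR q n / (qfactR q k * qfactR q (n - k))

/-- ℂ[z] with basis the monomials z^m (with its convolution product). -/
abbrev P1 : Type := AddMonoidAlgebra ℂ ℕ

/-- ℂ[x] ⊗ ℂ[y] with basis the monomials x^k y^l. -/
abbrev P2 : Type := (ℕ × ℕ) →₀ ℂ

def mono (k l : ℕ) : P2 := Finsupp.single (k, l) 1

/-- q-Fischer inner product on ℂ[z]: ⟨z^n, z^m⟩ = δ_{n,m} q^{n(n−1)/2}[n]!. -/
def ip1 (q : ℝ) (P Q : P1) : ℂ :=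
  Finsupp.sum P.coeff fun m c =>
    c * (starRingEnd ℂ) (Q.coeff m) * ((q : ℂ) ^ (m * (m - 1) / 2) * (qfactR q m : ℂ))

/-- q-Fischer inner product on ℂ[x]⊗ℂ[y]:
⟨x^a y^b, x^c y^d⟩ = δ_{a,c} δ_{b,d} q^{a(a−1)/2+b(b−1)/2}[a]![b]!. -/
def ip2 (q : ℝ) (P Q : P2) : ℂ :=
  Finsupp.sum P fun ab c =>
    c * (starRingEnd ℂ) (Q ab) *
      ((q : ℂ) ^ (ab.1 * (ab.1 - 1) / 2 + ab.2 * (ab.2 - 1) / 2)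
        * (qfactR q ab.1 : ℂ) * (qfactR q ab.2 : ℂ))

/-- The element f(x)g(y) of ℂ[x]⊗ℂ[y]. -/
def fg (f g : P1) : P2 :=
  Finsupp.sum f.coeff fun a ca => Finsupp.sum g.coeff fun b cb => Finsupp.single (a, b) (ca * cb)

/-- The q-derivative D_{q²}, with D_{q²} z^m = q^{m−1}[m] z^{m−1}. -/
def Dq (q : ℝ) : P1 →ₗ[ℂ] P1 :=
  (Finsupp.lsum ℂ fun (m : ℕ) => LinearMap.toSpanSingleton ℂ P1
    (((q ^ (m - 1) * qnumR q m : ℝ) : ℂ) • (AddMonoidAlgebra.ofCoeff (Finsupp.single (m - 1) 1) : P1)))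
      ∘ₗ (AddMonoidAlgebra.coeffLinearEquiv ℂ).toLinearMap

/-- The scaling operator h(z) ↦ h(c·z). -/
def scP (c : ℂ) : P1 →ₗ[ℂ] P1 :=
  (Finsupp.lsum ℂ fun m => LinearMap.toSpanSingleton ℂ P1
    ((c ^ m) • (AddMonoidAlgebra.ofCoeff (Finsupp.single m 1) : P1)))
      ∘ₗ (AddMonoidAlgebra.coeffLinearEquiv ℂ).toLinearMap

/-- The map ev : ℂ[z] → ℂ[x,y], z^n ↦ Σ_{k=0}^n [n choose k] q^{(k+λ)(n−k)} x^k y^{n−k}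
(the ordered expansion of (x+q^λ y)^n in the quantum plane). -/
def ev (q lam : ℝ) : P1 →ₗ[ℂ] P2 :=
  (Finsupp.lsum ℂ fun n => LinearMap.toSpanSingleton ℂ P2
    (∑ k ∈ Finset.range (n + 1),
      (((qbinomR q n k * q ^ (((k : ℝ) + lam) * ((n : ℝ) - (k : ℝ))) : ℝ)) : ℂ)
        • mono k (n - k)))
      ∘ₗ (AddMonoidAlgebra.coeffLinearEquiv ℂ).toLinearMap

/-! ### Auxiliary lemmas -/

lemma qnumR_ne_zero {q : ℝ} (hq : 0 < q) (hq1 : q ≠ 1) {x : ℝ} (hx : 0 < x) :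
    qnumR q x ≠ 0 := by
  unfold qnumR
  have hden : q - q⁻¹ ≠ 0 := by
    intro h
    rw [sub_eq_zero] at h
    have h2 : q * q = 1 := by nth_rewrite 2 [h]; exact mul_inv_cancel₀ hq.ne'
    rcases hq1.lt_or_gt with h1 | h1 <;> nlinarith
  have hnum : q ^ x - q ^ (-x) ≠ 0 := by
    rw [sub_ne_zero]
    rcases hq1.lt_or_gt with h1 | h1
    · exact ne_of_lt ((Real.rpow_lt_rpow_left_iff_of_base_lt_one hq h1).mpr (by linarith))
    · exact ne_of_gt ((Real.rpow_lt_rpow_left_iff h1).mpr (by linarith))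
  exact div_ne_zero hnum hden

lemma qfactR_ne_zero {q : ℝ} (hq : 0 < q) (hq1 : q ≠ 1) (n : ℕ) :
    qfactR q n ≠ 0 := by
  unfold qfactR
  exact Finset.prod_ne_zero_iff.mpr fun s _ => qnumR_ne_zero hq hq1 (by positivity)

lemma tri (a b : ℕ) :
    a * b + (a * (a - 1) / 2 + b * (b - 1) / 2) = (a + b) * (a + b - 1) / 2 := by
  rw [← Nat.choose_two_right, ← Nat.choose_two_right, ← Nat.choose_two_right]
  induction b with
  | zero => simp
  | succ b ih =>
    have h1 : (b + 1).choose 2 = b + b.choose 2 := by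
      rw [Nat.choose_succ_succ, Nat.choose_one_right]
    have h2 : (a + (b + 1)).choose 2 = (a + b) + (a + b).choose 2 := by
      rw [show a + (b + 1) = (a + b) + 1 by ring, Nat.choose_succ_succ, Nat.choose_one_right]
    rw [h1, h2, ← ih, Nat.mul_succ]
    ring

/-! ### Linearity lemmas for the inner products -/

lemma ip1_zero_left (q : ℝ) (Q : P1) : ip1 q 0 Q = 0 := by
  simp [ip1]

lemma ip2_zero_left (q : ℝ) (Q : P2) : ip2 q 0 Q = 0 := by
  simp [ip2]

lemma ip1_single_left (q : ℝ) (n : ℕ) (c : ℂ) (Q : P1) :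
    ip1 q (AddMonoidAlgebra.single n c) Q
      = c * (starRingEnd ℂ) (Q.coeff n) * ((q : ℂ) ^ (n * (n - 1) / 2) * (qfactR q n : ℂ)) := by
  unfold ip1
  rw [AddMonoidAlgebra.coeff_single]
  exact Finsupp.sum_single_index (by simp)

lemma ip2_single_left (q : ℝ) (kl : ℕ × ℕ) (c : ℂ) (Q : P2) :
    ip2 q (Finsupp.single kl c) Q
      = c * (starRingEnd ℂ) (Q kl) *
          ((q : ℂ) ^ (kl.1 * (kl.1 - 1) / 2 + kl.2 * (kl.2 - 1) / 2)
            * (qfactR q kl.1 : ℂ) * (qfactR q kl.2 : ℂ)) := by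
  unfold ip2
  exact Finsupp.sum_single_index (by simp)

lemma ip1_add_left (q : ℝ) (P₁ P₂ Q : P1) :
    ip1 q (P₁ + P₂) Q = ip1 q P₁ Q + ip1 q P₂ Q := by
  unfold ip1
  rw [AddMonoidAlgebra.coeff_add]
  exact Finsupp.sum_add_index' (by intro a; simp) (by intro a b₁ b₂; ring)

lemma ip2_add_left (q : ℝ) (P₁ P₂ : P2) (Q : P2) :
    ip2 q (P₁ + P₂) Q = ip2 q P₁ Q + ip2 q P₂ Q := by
  unfold ip2
  exact Finsupp.sum_add_index' (by intro a; simp) (by intro a b₁ b₂; ring)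

lemma ip2_smul_left (q : ℝ) (c : ℂ) (P Q : P2) :
    ip2 q (c • P) Q = c * ip2 q P Q := by
  unfold ip2
  rw [Finsupp.sum_smul_index' (by intro i; simp), Finsupp.mul_sum]
  apply Finsupp.sum_congr
  intro ab _
  rw [smul_eq_mul]
  ring

lemma ip2_sum_left {ι : Type*} (q : ℝ) (s : Finset ι) (F : ι → P2) (Q : P2) :
    ip2 q (∑ i ∈ s, F i) Q = ∑ i ∈ s, ip2 q (F i) Q := by
  classical
  induction s using Finset.induction with
  | empty => simp [ip2_zero_left]
  | insert _ _ h ih => rw [Finset.sum_insert h, ip2_add_left, ih, Finset.sum_insert h]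

lemma ip1_add_right (q : ℝ) (P Q₁ Q₂ : P1) :
    ip1 q P (Q₁ + Q₂) = ip1 q P Q₁ + ip1 q P Q₂ := by
  unfold ip1
  rw [← Finsupp.sum_add]
  apply Finsupp.sum_congr
  intro m _
  rw [show (Q₁ + Q₂).coeff m = Q₁.coeff m + Q₂.coeff m from rfl, map_add]
  ring

lemma ip2_add_right (q : ℝ) (P Q₁ Q₂ : P2) :
    ip2 q P (Q₁ + Q₂) = ip2 q P Q₁ + ip2 q P Q₂ := by
  unfold ip2
  rw [← Finsupp.sum_add]
  apply Finsupp.sum_congr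
  intro ab _
  simp only [Finsupp.coe_add, Pi.add_apply, map_add]
  ring

lemma ip1_zero_right (q : ℝ) (P : P1) : ip1 q P 0 = 0 := by
  simp [ip1]

lemma ip2_zero_right (q : ℝ) (P : P2) : ip2 q P 0 = 0 := by
  simp [ip2]

/-! ### fg lemmas -/

lemma fg_zero_left (g : P1) : fg 0 g = 0 := by
  simp [fg]

lemma fg_zero_right (f : P1) : fg f 0 = 0 := by
  simp [fg]

lemma fg_add_left (f₁ f₂ g : P1) : fg (f₁ + f₂) g = fg f₁ g + fg f₂ g := by
  unfold fg
  rw [AddMonoidAlgebra.coeff_add]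
  apply Finsupp.sum_add_index'
  · intro a; simp
  · intro a c₁ c₂
    rw [← Finsupp.sum_add]
    apply Finsupp.sum_congr
    intro b _
    rw [add_mul, Finsupp.single_add]

lemma fg_add_right (f g₁ g₂ : P1) : fg f (g₁ + g₂) = fg f g₁ + fg f g₂ := by
  unfold fg
  simp only [AddMonoidAlgebra.coeff_add]
  rw [← Finsupp.sum_add]
  apply Finsupp.sum_congr
  intro a _
  exact Finsupp.sum_add_index' (by intro b; simp) (by intro b c₁ c₂; rw [mul_add, Finsupp.single_add])

lemma fg_single_single (a b : ℕ) (ca cb : ℂ) :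
    fg (AddMonoidAlgebra.single a ca) (AddMonoidAlgebra.single b cb) = Finsupp.single (a, b) (ca * cb) := by
  unfold fg
  rw [AddMonoidAlgebra.coeff_single, AddMonoidAlgebra.coeff_single, Finsupp.sum_single_index (by simp), Finsupp.sum_single_index (by simp)]


/-! ### The key real identity -/

lemma realkey {q : ℝ} (hq : 0 < q) (hq1 : q ≠ 1) (lam : ℝ) (a b : ℕ) :
    qbinomR q (a + b) a * q ^ (((a : ℝ) + lam) * (((a + b : ℕ) : ℝ) - (a : ℝ)))
        * (q ^ (a * (a - 1) / 2 + b * (b - 1) / 2) * (qfactR q a * qfactR q b))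
      = (q ^ lam) ^ b * (q ^ ((a + b) * (a + b - 1) / 2) * qfactR q (a + b)) := by
  have hsub : ((a + b : ℕ) : ℝ) - (a : ℝ) = (b : ℕ) := by push_cast; ring
  have hexp : ((a : ℝ) + lam) * ((b : ℕ) : ℝ) = ((a * b : ℕ) : ℝ) + lam * (b : ℝ) := by
    push_cast; ring
  rw [hsub, hexp, Real.rpow_add hq, Real.rpow_natCast,
    Real.rpow_mul hq.le, Real.rpow_natCast]
  rw [← tri a b, pow_add]
  unfold qbinomR
  rw [Nat.add_sub_cancel_left]
  field_simp [qfactR_ne_zero hq hq1]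
  ring

/-! ### The single-single-single case -/

lemma ev_adjoint_single (q : ℝ) (hq : 0 < q) (hq1 : q ≠ 1) (lam : ℝ)
    (n a b : ℕ) (c ca cb : ℂ) :
    ip2 q (ev q lam (AddMonoidAlgebra.single n c)) (fg (AddMonoidAlgebra.single a ca) (AddMonoidAlgebra.single b cb))
      = ip1 q (AddMonoidAlgebra.single n c)
          ((show P1 from AddMonoidAlgebra.single a ca) * scP (((q ^ lam : ℝ)) : ℂ) (AddMonoidAlgebra.single b cb)) := by
  have hev : ev q lam (AddMonoidAlgebra.single n c)
      = c • ∑ k ∈ Finset.range (n + 1),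
          (((qbinomR q n k * q ^ (((k : ℝ) + lam) * ((n : ℝ) - (k : ℝ))) : ℝ)) : ℂ)
            • mono k (n - k) := by
    rw [ev, LinearMap.comp_apply]; erw [Finsupp.lsum_single]; rw [LinearMap.toSpanSingleton_apply]
  have hsc : scP (((q ^ lam : ℝ)) : ℂ) (AddMonoidAlgebra.single b cb)
      = AddMonoidAlgebra.single b (cb * (((q ^ lam : ℝ)) : ℂ) ^ b) := by
    rw [scP, LinearMap.comp_apply]; erw [Finsupp.lsum_single]
    rw [LinearMap.toSpanSingleton_apply, smul_smul, AddMonoidAlgebra.ofCoeff_single, AddMonoidAlgebra.smul_single, smul_eq_mul, mul_one]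
  have hmul : (show P1 from AddMonoidAlgebra.single a ca)
        * (show P1 from AddMonoidAlgebra.single b (cb * (((q ^ lam : ℝ)) : ℂ) ^ b))
      = AddMonoidAlgebra.single (a + b) (ca * (cb * (((q ^ lam : ℝ)) : ℂ) ^ b)) :=
    AddMonoidAlgebra.single_mul_single ..
  rw [hev, hsc, hmul, fg_single_single, ip2_smul_left, ip2_sum_left, ip1_single_left]
  simp only [ip2_smul_left, mono, ip2_single_left, one_mul]
  by_cases h : a + b = n
  · rw [Finset.sum_eq_single a]
    · have hna : n - a = b := by omega
      rw [hna]
      rw [Finsupp.single_apply, if_pos rfl, AddMonoidAlgebra.coeff_single, Finsupp.single_apply, if_pos h]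
      have key : (((qbinomR q n a * q ^ (((a : ℝ) + lam) * ((n : ℝ) - (a : ℝ))) : ℝ)) : ℂ)
          * ((q : ℂ) ^ (a * (a - 1) / 2 + b * (b - 1) / 2)
              * ((qfactR q a : ℝ) : ℂ) * ((qfactR q b : ℝ) : ℂ))
          = (((q ^ lam : ℝ)) : ℂ) ^ b
              * ((q : ℂ) ^ (n * (n - 1) / 2) * ((qfactR q n : ℝ) : ℂ)) := by
        subst h
        have h3 := congrArg (Complex.ofReal) (realkey hq hq1 lam a b)
        push_cast at h3 ⊢
        linear_combination h3
      simp only [map_mul, map_pow, Complex.conj_ofReal]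
      linear_combination (c * (starRingEnd ℂ) ca * (starRingEnd ℂ) cb) * key
    · intro k hk hka
      rw [Finsupp.single_apply, if_neg (by simp only [Prod.mk.injEq]; tauto)]
      simp
    · intro ha
      exact absurd (Finset.mem_range.mpr (by omega)) ha
  · rw [AddMonoidAlgebra.coeff_single, Finsupp.single_apply, if_neg h]
    rw [Finset.sum_eq_zero, mul_zero]
    · simp
    · intro k hk
      rw [Finsupp.single_apply, if_neg]
      · simp
      · intro hEq
        rw [Prod.mk.injEq] at hEq
        exact h (by rw [Finset.mem_range] at hk; omega)

/-- **Adjoint of the evaluation map** (formula (5.5)):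
ev†(f ⊗ g)(z) = f(z)g(q^λ z), i.e. for all P, f, g:
⟨ev(P), f(x)g(y)⟩ = ⟨P, f(z)·g(q^λ z)⟩. -/
theorem ev_adjoint (q : ℝ) (hq : 0 < q) (hq1 : q ≠ 1) (lam : ℝ)
    (P f g : P1) :
    ip2 q (ev q lam P) (fg f g)
      = ip1 q P (f * scP (((q ^ lam : ℝ)) : ℂ) g) := by
  induction P using AddMonoidAlgebra.induction_linear with
  | zero => rw [map_zero, ip2_zero_left, ip1_zero_left]
  | add P₁ P₂ ih₁ ih₂ => rw [map_add, ip2_add_left, ip1_add_left, ih₁, ih₂]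
  | single n c =>
    induction f using AddMonoidAlgebra.induction_linear with
    | zero => rw [fg_zero_left, ip2_zero_right, zero_mul, ip1_zero_right]
    | add f₁ f₂ ih₁ ih₂ => rw [fg_add_left, ip2_add_right, add_mul, ip1_add_right, ih₁, ih₂]
    | single a ca =>
      induction g using AddMonoidAlgebra.induction_linear with
      | zero => rw [fg_zero_right, ip2_zero_right, map_zero, mul_zero, ip1_zero_right]
      | add g₁ g₂ ih₁ ih₂ =>
        rw [fg_add_right, ip2_add_right, map_add, mul_add, ip1_add_right, ih₁, ih₂]
      | single b cb => exact ev_adjoint_single q hq hq1 lam n a b c ca cb
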